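/- There is an absolute constant $C > 0$ such that the following holds. Let $x_1,\ldots,x_n$ be real numbers and let $i_1,\ldots,i_M$ be independent indices each uniform on $[n]$. Then with probability at least $1 - M^{-1/8}$, $\Big|\frac{1}{M}\sum_{j=1}^M x_{i_j} - \frac{1}{n}\sum_{j=1}^n x_j\Big| \le C M^{-1/4}\Big(\frac{1}{n}\sum_{j=1}^n |x_j|^{3/2}\Big)^{2/3}.$ -/

import Mathlib

open Finset


lemma pi_sum_single {n M : ℕ} (j : Fin M) (h : Fin n → ℝ) :
    ∑ ι : Fin M → Fin n, h (ι j) = (n:ℝ)^(M-1) * ∑ k, h k := by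
  have key := Finset.prod_univ_sum (fun _ : Fin M => (univ : Finset (Fin n)))
    (fun k i => if k = j then h i else 1)
  rw [Fintype.piFinset_univ] at key
  have e1 : ∀ k : Fin M, (∑ i : Fin n, if k = j then h i else 1)
      = if k = j then (∑ k, h k) else (n:ℝ) := by
    intro k; split_ifs <;> simp
  have e2 : (∏ k ∈ (univ : Finset (Fin M)).erase j,
      if k = j then (∑ k, h k) else (n:ℝ)) = (n:ℝ)^(M-1) := by
    rw [Finset.prod_congr rfl (fun k hk => if_neg (Finset.ne_of_mem_erase hk)),
      Finset.prod_const]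
    simp [Finset.card_erase_of_mem]
  have hL : (∏ k : Fin M, ∑ i : Fin n, if k = j then h i else 1)
      = (∑ k, h k) * (n:ℝ)^(M-1) := by
    rw [Finset.prod_congr rfl (fun k _ => e1 k),
      ← Finset.mul_prod_erase univ _ (mem_univ j), if_pos rfl, e2]
  have hR : ∀ ι : Fin M → Fin n, (∏ k : Fin M, if k = j then h (ι k) else 1) = h (ι j) := by
    intro ι
    rw [← Finset.mul_prod_erase univ _ (mem_univ j), if_pos rfl,
      Finset.prod_congr rfl (fun k hk => if_neg (Finset.ne_of_mem_erase hk))]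
    simp
  rw [hL, Finset.sum_congr rfl (fun ι _ => hR ι)] at key
  rw [← key]; ring

lemma pi_sum_pair {n M : ℕ} {j j' : Fin M} (hjj : j ≠ j') (h₁ h₂ : Fin n → ℝ) :
    ∑ ι : Fin M → Fin n, h₁ (ι j) * h₂ (ι j')
      = (n:ℝ)^(M-2) * (∑ k, h₁ k) * (∑ k, h₂ k) := by
  have key := Finset.prod_univ_sum (fun _ : Fin M => (univ : Finset (Fin n)))
    (fun k i => if k = j then h₁ i else if k = j' then h₂ i else 1)
  rw [Fintype.piFinset_univ] at key
  have hj' : j' ∈ (univ : Finset (Fin M)).erase j := by simp [hjj.symm]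
  have e1 : ∀ k : Fin M, (∑ i : Fin n, if k = j then h₁ i else if k = j' then h₂ i else 1)
      = if k = j then (∑ k, h₁ k) else if k = j' then (∑ k, h₂ k) else (n:ℝ) := by
    intro k; split_ifs <;> simp
  have ne2 : ∀ k ∈ ((univ : Finset (Fin M)).erase j).erase j', k ≠ j ∧ k ≠ j' := fun k hk =>
    ⟨Finset.ne_of_mem_erase (Finset.mem_of_mem_erase hk), Finset.ne_of_mem_erase hk⟩
  have e2 : (∏ k ∈ ((univ : Finset (Fin M)).erase j).erase j',
      if k = j then (∑ k, h₁ k) else if k = j' then (∑ k, h₂ k) else (n:ℝ)) = (n:ℝ)^(M-2) := by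
    rw [Finset.prod_congr rfl (fun k hk => by rw [if_neg (ne2 k hk).1, if_neg (ne2 k hk).2]),
      Finset.prod_const]
    rw [Finset.card_erase_of_mem hj', Finset.card_erase_of_mem (mem_univ j), Nat.sub_sub, Finset.card_fin]
  have hL : (∏ k : Fin M, ∑ i : Fin n, if k = j then h₁ i else if k = j' then h₂ i else 1)
      = (∑ k, h₁ k) * ((∑ k, h₂ k) * (n:ℝ)^(M-2)) := by
    rw [Finset.prod_congr rfl (fun k _ => e1 k),
      ← Finset.mul_prod_erase univ _ (mem_univ j), if_pos rfl,
      ← Finset.mul_prod_erase _ _ hj', if_neg hjj.symm, if_pos rfl, e2]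
  have hR : ∀ ι : Fin M → Fin n,
      (∏ k : Fin M, if k = j then h₁ (ι k) else if k = j' then h₂ (ι k) else 1)
        = h₁ (ι j) * h₂ (ι j') := by
    intro ι
    rw [← Finset.mul_prod_erase univ _ (mem_univ j), if_pos rfl,
      ← Finset.mul_prod_erase _ _ hj', if_neg hjj.symm, if_pos rfl,
      Finset.prod_congr rfl (fun k hk => by
        rw [if_neg (ne2 k hk).1, if_neg (ne2 k hk).2])]
    simp
  rw [hL, Finset.sum_congr rfl (fun ι _ => hR ι)] at key
  rw [← key]; ring

lemma var_sum {n M : ℕ} (w : Fin n → ℝ) (hw : ∑ k, w k = 0) :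
    ∑ ι : Fin M → Fin n, (∑ j, w (ι j))^2 = (M:ℝ) * (n:ℝ)^(M-1) * ∑ k, (w k)^2 := by
  have step1 : ∀ ι : Fin M → Fin n, (∑ j, w (ι j))^2
      = ∑ j : Fin M, ∑ j' : Fin M, w (ι j) * w (ι j') := by
    intro ι; rw [sq, Finset.sum_mul_sum]
  calc ∑ ι : Fin M → Fin n, (∑ j, w (ι j))^2
      = ∑ ι : Fin M → Fin n, ∑ j : Fin M, ∑ j' : Fin M, w (ι j) * w (ι j') :=
        Finset.sum_congr rfl fun ι _ => step1 ι
    _ = ∑ j : Fin M, ∑ ι : Fin M → Fin n, ∑ j' : Fin M, w (ι j) * w (ι j') :=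
        Finset.sum_comm
    _ = ∑ j : Fin M, ∑ j' : Fin M, ∑ ι : Fin M → Fin n, w (ι j) * w (ι j') :=
        Finset.sum_congr rfl fun j _ => Finset.sum_comm
    _ = ∑ j : Fin M, ∑ j' : Fin M,
          (if j' = j then (n:ℝ)^(M-1) * ∑ k, (w k)^2 else 0) := by
        refine Finset.sum_congr rfl fun j _ => Finset.sum_congr rfl fun j' _ => ?_
        by_cases hjj : j' = j
        · subst hjj
          rw [if_pos rfl]
          have := pi_sum_single (n := n) (M := M) j' (fun k => w k * w k)
          simpa [sq] using this
        · rw [if_neg hjj, pi_sum_pair (Ne.symm hjj) w w, hw]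
          ring
    _ = ∑ j : Fin M, (n:ℝ)^(M-1) * ∑ k, (w k)^2 := by
        refine Finset.sum_congr rfl fun j _ => ?_
        simp
    _ = (M:ℝ) * (n:ℝ)^(M-1) * ∑ k, (w k)^2 := by
        rw [Finset.sum_const, Finset.card_fin, nsmul_eq_mul]; ring

set_option maxHeartbeats 1000000 in
open scoped Classical in
lemma core {n M : ℕ} (hn : 1 ≤ n) (hM : 1 ≤ M) (x : Fin n → ℝ)
    (hx : ∑ k, |x k| ^ (3/2 : ℝ) ≤ (n:ℝ)) :
    (1 - (M : ℝ) ^ (-(1 / 8 : ℝ))) * (n:ℝ)^M ≤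
      ((Finset.univ.filter (fun ι : Fin M → Fin n =>
        |(1 / (M : ℝ)) * ∑ j : Fin M, x (ι j) - (1 / (n : ℝ)) * ∑ j : Fin n, x j|
          ≤ 9 * (M : ℝ) ^ (-(1 / 4 : ℝ)))).card : ℝ) := by
  have hM1 : (1:ℝ) ≤ (M:ℝ) := by exact_mod_cast hM
  have Mpos : (0:ℝ) < (M:ℝ) := by linarith
  have hn1 : (1:ℝ) ≤ (n:ℝ) := by exact_mod_cast hn
  have npos : (0:ℝ) < (n:ℝ) := by linarith
  set T : ℝ := (M:ℝ) ^ ((3:ℝ)/4) with hT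
  have hT1 : (1:ℝ) ≤ T := Real.one_le_rpow hM1 (by norm_num)
  have hTpos : 0 < T := by linarith
  set y : Fin n → ℝ := fun k => if |x k| ≤ T then x k else 0 with hy
  set z : Fin n → ℝ := fun k => x k - y k with hz
  set μy : ℝ := (1/(n:ℝ)) * ∑ k, y k with hμy
  set μz : ℝ := (1/(n:ℝ)) * ∑ k, z k with hμz
  have eT2 : T ^ ((1:ℝ)/2) = (M:ℝ)^((3:ℝ)/8) := by
    rw [hT, ← Real.rpow_mul Mpos.le]; norm_num
  -- pointwise truncation bounds
  have fy : ∀ k, (y k)^2 ≤ (M:ℝ)^((3:ℝ)/8) * |x k| ^ ((3:ℝ)/2) := by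
    intro k
    by_cases h : |x k| ≤ T
    · have hyk : y k = x k := if_pos h
      rw [hyk, ← sq_abs]
      have e1 : |x k| ^ (2:ℕ) = |x k| ^ ((1:ℝ)/2) * |x k| ^ ((3:ℝ)/2) := by
        rw [← Real.rpow_natCast |x k| 2, ← Real.rpow_add' (abs_nonneg _)] <;> norm_num
      rw [e1]
      have e2 : |x k| ^ ((1:ℝ)/2) ≤ T ^ ((1:ℝ)/2) :=
        Real.rpow_le_rpow (abs_nonneg _) h (by norm_num)
      calc |x k| ^ ((1:ℝ)/2) * |x k| ^ ((3:ℝ)/2)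
          ≤ T ^ ((1:ℝ)/2) * |x k| ^ ((3:ℝ)/2) :=
            mul_le_mul_of_nonneg_right e2 (Real.rpow_nonneg (abs_nonneg _) _)
        _ = (M:ℝ)^((3:ℝ)/8) * |x k| ^ ((3:ℝ)/2) := by rw [eT2]
    · have hyk : y k = 0 := if_neg h
      rw [hyk]
      norm_num
      positivity
  have fz : ∀ k, |z k| ≤ (M:ℝ)^(-(3:ℝ)/8) * |x k| ^ ((3:ℝ)/2) := by
    intro k
    by_cases h : |x k| ≤ T
    · have : z k = 0 := by simp [hz, hy, if_pos h]
      rw [this]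
      simp only [abs_zero]
      positivity
    · push_neg at h
      have hzk : z k = x k := by simp [hz, hy, if_neg (not_le.mpr h)]
      have hxpos : 0 < |x k| := lt_of_lt_of_le hTpos h.le
      rw [hzk]
      have e1 : |x k| ^ ((3:ℝ)/2) = |x k| ^ (1:ℝ) * |x k| ^ ((1:ℝ)/2) := by
        rw [← Real.rpow_add hxpos]; norm_num
      have e2 : (M:ℝ)^((3:ℝ)/8) ≤ |x k|^((1:ℝ)/2) := by
        rw [← eT2]; exact Real.rpow_le_rpow hTpos.le h.le (by norm_num)
      have e4 : (M:ℝ)^(-(3:ℝ)/8) * (M:ℝ)^((3:ℝ)/8) = 1 := by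
        rw [← Real.rpow_add Mpos]; norm_num
      have e5 : (0:ℝ) < (M:ℝ)^(-(3:ℝ)/8) := Real.rpow_pos_of_pos Mpos _
      rw [e1, Real.rpow_one]
      nlinarith [mul_le_mul_of_nonneg_left e2 (mul_nonneg e5.le hxpos.le)]
  -- summed bounds
  have Sy2 : ∑ k, (y k)^2 ≤ (M:ℝ)^((3:ℝ)/8) * (n:ℝ) := by
    calc ∑ k, (y k)^2 ≤ ∑ k, (M:ℝ)^((3:ℝ)/8) * |x k| ^ ((3:ℝ)/2) :=
          Finset.sum_le_sum fun k _ => fy k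
      _ = (M:ℝ)^((3:ℝ)/8) * ∑ k, |x k| ^ ((3:ℝ)/2) := by rw [Finset.mul_sum]
      _ ≤ (M:ℝ)^((3:ℝ)/8) * (n:ℝ) := by
          have : ∑ k, |x k| ^ ((3:ℝ)/2) ≤ (n:ℝ) := hx
          exact mul_le_mul_of_nonneg_left this (Real.rpow_nonneg Mpos.le _)
  have Sz : ∑ k, |z k| ≤ (M:ℝ)^(-(3:ℝ)/8) * (n:ℝ) := by
    calc ∑ k, |z k| ≤ ∑ k, (M:ℝ)^(-(3:ℝ)/8) * |x k| ^ ((3:ℝ)/2) :=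
          Finset.sum_le_sum fun k _ => fz k
      _ = (M:ℝ)^(-(3:ℝ)/8) * ∑ k, |x k| ^ ((3:ℝ)/2) := by rw [Finset.mul_sum]
      _ ≤ (M:ℝ)^(-(3:ℝ)/8) * (n:ℝ) := by
          have : ∑ k, |x k| ^ ((3:ℝ)/2) ≤ (n:ℝ) := hx
          exact mul_le_mul_of_nonneg_left this (Real.rpow_nonneg Mpos.le _)
  -- centered y
  set w : Fin n → ℝ := fun k => y k - μy with hwdef
  have hnμ : (n:ℝ) * μy = ∑ k, y k := by
    rw [hμy]; field_simp
  have hw0 : ∑ k, w k = 0 := by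
    simp only [hwdef, Finset.sum_sub_distrib, Finset.sum_const, Finset.card_fin,
      nsmul_eq_mul]
    rw [← hnμ]; ring
  have hw2 : ∑ k, (w k)^2 ≤ ∑ k, (y k)^2 := by
    have expand : ∑ k, (w k)^2 = ∑ k, (y k)^2 - (n:ℝ) * μy^2 := by
      have : ∀ k, (w k)^2 = (y k)^2 - 2*μy*(y k) + μy^2 := by
        intro k; simp only [hwdef]; ring
      rw [Finset.sum_congr rfl fun k _ => this k]
      rw [Finset.sum_add_distrib, Finset.sum_sub_distrib, Finset.sum_const,
        Finset.card_fin, nsmul_eq_mul, ← Finset.mul_sum, ← hnμ]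
      ring
    nlinarith [sq_nonneg μy, mul_nonneg npos.le (sq_nonneg μy)]
  -- Chebyshev bound on B1
  set B1 : Finset (Fin M → Fin n) := univ.filter
    (fun ι => ¬ |(∑ j, y (ι j)) - (M:ℝ)*μy| ≤ 3 * T) with hB1
  have sumw : ∀ ι : Fin M → Fin n, (∑ j, w (ι j)) = (∑ j, y (ι j)) - (M:ℝ)*μy := by
    intro ι
    simp only [hwdef, Finset.sum_sub_distrib, Finset.sum_const, Finset.card_fin,
      nsmul_eq_mul]
  have cheb : (B1.card : ℝ) * (3*T)^2 ≤ (M:ℝ) * (n:ℝ)^(M-1) * ∑ k, (w k)^2 := by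
    rw [← var_sum w hw0]
    calc (B1.card : ℝ) * (3*T)^2 = ∑ _ι ∈ B1, (3*T)^2 := by
          rw [Finset.sum_const, nsmul_eq_mul]
      _ ≤ ∑ ι ∈ B1, (∑ j, w (ι j))^2 := by
          refine Finset.sum_le_sum fun ι hι => ?_
          have hι' := (Finset.mem_filter.mp hι).2
          push_neg at hι'
          rw [sumw ι] at *
          calc (3*T)^2 = |3*T|^2 := by rw [abs_of_pos (by positivity)]
            _ ≤ |(∑ j, y (ι j)) - (M:ℝ)*μy|^2 := by
                apply pow_le_pow_left₀ (abs_nonneg _) _ 2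
                rw [abs_of_pos (by positivity)]
                exact hι'.le
            _ = ((∑ j, y (ι j)) - (M:ℝ)*μy)^2 := sq_abs _
      _ ≤ ∑ ι : Fin M → Fin n, (∑ j, w (ι j))^2 :=
          Finset.sum_le_sum_of_subset_of_nonneg (Finset.filter_subset _ _)
            (fun ι _ _ => sq_nonneg _)
  have pow_split : (n:ℝ)^(M-1) * (n:ℝ) = (n:ℝ)^M := by
    rw [← pow_succ]
    congr 1
    omega
  have chebB : (B1.card : ℝ) * (9 * (M:ℝ)^((3:ℝ)/2)) ≤ (M:ℝ)^((11:ℝ)/8) * (n:ℝ)^M := by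
    have e1 : (3*T)^2 = 9 * (M:ℝ)^((3:ℝ)/2) := by
      rw [mul_pow, hT, ← Real.rpow_natCast ((M:ℝ)^((3:ℝ)/4)) 2, ← Real.rpow_mul Mpos.le]
      norm_num
    have e2 : (M:ℝ) * ((M:ℝ)^((3:ℝ)/8)) = (M:ℝ)^((11:ℝ)/8) := by
      nth_rewrite 1 [← Real.rpow_one (M:ℝ)]
      rw [← Real.rpow_add Mpos]; norm_num
    calc (B1.card : ℝ) * (9 * (M:ℝ)^((3:ℝ)/2)) = (B1.card : ℝ) * (3*T)^2 := by rw [e1]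
      _ ≤ (M:ℝ) * (n:ℝ)^(M-1) * ∑ k, (w k)^2 := cheb
      _ ≤ (M:ℝ) * (n:ℝ)^(M-1) * ((M:ℝ)^((3:ℝ)/8) * (n:ℝ)) := by
          refine mul_le_mul_of_nonneg_left (le_trans hw2 Sy2) (by positivity)
      _ = (M:ℝ) * ((M:ℝ)^((3:ℝ)/8)) * ((n:ℝ)^(M-1) * (n:ℝ)) := by ring
      _ = (M:ℝ)^((11:ℝ)/8) * (n:ℝ)^M := by rw [e2, pow_split]
  have B1bound : (B1.card : ℝ) ≤ (1/9) * (M:ℝ)^(-(1/8:ℝ)) * (n:ℝ)^M := by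
    have h9 : (0:ℝ) < 9 * (M:ℝ)^((3:ℝ)/2) := by positivity
    rw [← mul_le_mul_iff_of_pos_right h9]
    calc (B1.card : ℝ) * (9 * (M:ℝ)^((3:ℝ)/2)) ≤ (M:ℝ)^((11:ℝ)/8) * (n:ℝ)^M := chebB
      _ = (1/9) * (M:ℝ)^(-(1/8:ℝ)) * (n:ℝ)^M * (9 * (M:ℝ)^((3:ℝ)/2)) := by
          rw [show ((11:ℝ)/8) = (-(1/8:ℝ)) + (3:ℝ)/2 by norm_num, Real.rpow_add Mpos]
          ring
  -- Markov bound on B2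
  set B2 : Finset (Fin M → Fin n) := univ.filter
    (fun ι => ¬ (∑ j, |z (ι j)|) ≤ 3 * T) with hB2
  have markov : (B2.card : ℝ) * (3*T) ≤ (M:ℝ)^((5:ℝ)/8) * (n:ℝ)^M := by
    calc (B2.card : ℝ) * (3*T) = ∑ _ι ∈ B2, 3*T := by rw [Finset.sum_const, nsmul_eq_mul]
      _ ≤ ∑ ι ∈ B2, ∑ j, |z (ι j)| := by
          refine Finset.sum_le_sum fun ι hι => ?_
          have hι' := (Finset.mem_filter.mp hι).2
          push_neg at hι'
          exact hι'.le
      _ ≤ ∑ ι : Fin M → Fin n, ∑ j, |z (ι j)| :=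
          Finset.sum_le_sum_of_subset_of_nonneg (Finset.filter_subset _ _)
            (fun ι _ _ => Finset.sum_nonneg fun j _ => abs_nonneg _)
      _ = ∑ j : Fin M, ∑ ι : Fin M → Fin n, |z (ι j)| := Finset.sum_comm
      _ = ∑ j : Fin M, (n:ℝ)^(M-1) * ∑ k, |z k| :=
          Finset.sum_congr rfl fun j _ => pi_sum_single j (fun k => |z k|)
      _ = (M:ℝ) * ((n:ℝ)^(M-1) * ∑ k, |z k|) := by
          rw [Finset.sum_const, Finset.card_fin, nsmul_eq_mul]
      _ ≤ (M:ℝ) * ((n:ℝ)^(M-1) * ((M:ℝ)^(-(3:ℝ)/8) * (n:ℝ))) := by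
          refine mul_le_mul_of_nonneg_left (mul_le_mul_of_nonneg_left Sz (by positivity)) Mpos.le
      _ = ((M:ℝ) * (M:ℝ)^(-(3:ℝ)/8)) * ((n:ℝ)^(M-1) * (n:ℝ)) := by ring
      _ = (M:ℝ)^((5:ℝ)/8) * (n:ℝ)^M := by
          rw [pow_split]
          congr 1
          nth_rewrite 1 [← Real.rpow_one (M:ℝ)]
          rw [← Real.rpow_add Mpos]; norm_num
  have B2bound : (B2.card : ℝ) ≤ (1/3) * (M:ℝ)^(-(1/8:ℝ)) * (n:ℝ)^M := by
    have h3 : (0:ℝ) < 3 * T := by positivity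
    rw [← mul_le_mul_iff_of_pos_right h3]
    calc (B2.card : ℝ) * (3*T) ≤ (M:ℝ)^((5:ℝ)/8) * (n:ℝ)^M := markov
      _ = (1/3) * (M:ℝ)^(-(1/8:ℝ)) * (n:ℝ)^M * (3*T) := by
          rw [hT, show ((5:ℝ)/8) = (-(1/8:ℝ)) + (3:ℝ)/4 by norm_num, Real.rpow_add Mpos]
          ring
  -- good set inclusion
  set G : Finset (Fin M → Fin n) := univ.filter
    (fun ι => |(∑ j, y (ι j)) - (M:ℝ)*μy| ≤ 3 * T ∧ (∑ j, |z (ι j)|) ≤ 3 * T) with hG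
  have hGsub : G ⊆ univ.filter (fun ι : Fin M → Fin n =>
      |(1 / (M : ℝ)) * ∑ j : Fin M, x (ι j) - (1 / (n : ℝ)) * ∑ j : Fin n, x j|
        ≤ 9 * (M : ℝ) ^ (-(1 / 4 : ℝ))) := by
    intro ι hι
    rw [Finset.mem_filter] at hι ⊢
    obtain ⟨-, h1, h2⟩ := hι
    refine ⟨Finset.mem_univ _, ?_⟩
    have hxsplit : ∀ k, x k = y k + z k := by intro k; simp [hz]
    have hμsplit : (1 / (n : ℝ)) * ∑ j : Fin n, x j = μy + μz := by
      rw [hμy, hμz, Finset.sum_congr rfl fun k _ => hxsplit k, Finset.sum_add_distrib]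
      ring
    have hSsplit : ∑ j : Fin M, x (ι j) = (∑ j, y (ι j)) + ∑ j, z (ι j) := by
      rw [Finset.sum_congr rfl fun j _ => hxsplit (ι j), Finset.sum_add_distrib]
    have decomp : (1 / (M : ℝ)) * ∑ j : Fin M, x (ι j) - (1 / (n : ℝ)) * ∑ j : Fin n, x j
        = (1/(M:ℝ)) * ((∑ j, y (ι j)) - (M:ℝ)*μy) + (1/(M:ℝ)) * (∑ j, z (ι j)) + (-μz) := by
      rw [hSsplit, hμsplit]
      field_simp
      ring
    have hMinv : (1/(M:ℝ)) * (3*T) = 3 * (M:ℝ)^(-(1/4:ℝ)) := by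
      rw [hT, show (1/(M:ℝ)) = (M:ℝ)^(-(1:ℝ)) by rw [Real.rpow_neg_one]; ring,
        mul_comm ((M:ℝ)^(-(1:ℝ))), mul_assoc, ← Real.rpow_add Mpos]
      norm_num
    have bd1 : |(1/(M:ℝ)) * ((∑ j, y (ι j)) - (M:ℝ)*μy)| ≤ 3 * (M:ℝ)^(-(1/4:ℝ)) := by
      rw [abs_mul, abs_of_pos (show (0:ℝ) < 1/(M:ℝ) by positivity), ← hMinv]
      exact mul_le_mul_of_nonneg_left h1 (by positivity)
    have bd2 : |(1/(M:ℝ)) * (∑ j, z (ι j))| ≤ 3 * (M:ℝ)^(-(1/4:ℝ)) := by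
      rw [abs_mul, abs_of_pos (show (0:ℝ) < 1/(M:ℝ) by positivity), ← hMinv]
      refine mul_le_mul_of_nonneg_left ?_ (by positivity)
      exact le_trans (Finset.abs_sum_le_sum_abs _ _) h2
    have bd3 : |(-μz)| ≤ 3 * (M:ℝ)^(-(1/4:ℝ)) := by
      rw [abs_neg]
      have : |μz| ≤ (M:ℝ)^(-(3:ℝ)/8) := by
        rw [hμz, abs_mul, abs_of_pos (show (0:ℝ) < 1/(n:ℝ) by positivity)]
        calc (1/(n:ℝ)) * |∑ k, z k| ≤ (1/(n:ℝ)) * ∑ k, |z k| :=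
              mul_le_mul_of_nonneg_left (Finset.abs_sum_le_sum_abs _ _) (by positivity)
          _ ≤ (1/(n:ℝ)) * ((M:ℝ)^(-(3:ℝ)/8) * (n:ℝ)) :=
              mul_le_mul_of_nonneg_left Sz (by positivity)
          _ = (M:ℝ)^(-(3:ℝ)/8) := by field_simp
      have e6 : (M:ℝ)^(-(3:ℝ)/8) ≤ (M:ℝ)^(-(1/4:ℝ)) :=
        Real.rpow_le_rpow_of_exponent_le hM1 (by norm_num)
      have e7 : (M:ℝ)^(-(1/4:ℝ)) ≤ 3 * (M:ℝ)^(-(1/4:ℝ)) := by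
        have := Real.rpow_pos_of_pos Mpos (-(1/4:ℝ))
        linarith
      linarith
    calc |(1 / (M : ℝ)) * ∑ j : Fin M, x (ι j) - (1 / (n : ℝ)) * ∑ j : Fin n, x j|
        ≤ |(1/(M:ℝ)) * ((∑ j, y (ι j)) - (M:ℝ)*μy)| + |(1/(M:ℝ)) * (∑ j, z (ι j))| + |(-μz)| := by
          rw [decomp]
          exact le_trans (abs_add_le _ _) (add_le_add (abs_add_le _ _) le_rfl)
      _ ≤ 9 * (M : ℝ) ^ (-(1 / 4 : ℝ)) := by linarith
  -- cover
  have cover : (univ : Finset (Fin M → Fin n)) ⊆ G ∪ B1 ∪ B2 := by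
    intro ι _
    simp only [hG, hB1, hB2, Finset.mem_union, Finset.mem_filter, Finset.mem_univ, true_and]
    tauto
  have cardcover : ((n:ℝ))^M ≤ (G.card : ℝ) + (B1.card : ℝ) + (B2.card : ℝ) := by
    have h1 : (univ : Finset (Fin M → Fin n)).card ≤ (G ∪ B1 ∪ B2).card :=
      Finset.card_le_card cover
    have h2 : (G ∪ B1 ∪ B2).card ≤ G.card + B1.card + B2.card :=
      le_trans (Finset.card_union_le _ _) (by
        have := Finset.card_union_le G B1
        omega)
    have h3 : (univ : Finset (Fin M → Fin n)).card = n^M := by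
      rw [Finset.card_univ, Fintype.card_fun, Fintype.card_fin, Fintype.card_fin]
    have : (n:ℕ)^M ≤ G.card + B1.card + B2.card := by omega
    calc ((n:ℝ))^M = ((n^M : ℕ) : ℝ) := by push_cast; ring
      _ ≤ ((G.card + B1.card + B2.card : ℕ) : ℝ) := by exact_mod_cast this
      _ = (G.card : ℝ) + (B1.card : ℝ) + (B2.card : ℝ) := by push_cast; ring
  have hMm8 : 0 ≤ (M:ℝ)^(-(1/8:ℝ)) * (n:ℝ)^M := by positivity
  have final : (1 - (M : ℝ) ^ (-(1 / 8 : ℝ))) * (n:ℝ)^M ≤ (G.card : ℝ) := by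
    have expand : (1 - (M : ℝ) ^ (-(1 / 8 : ℝ))) * (n:ℝ)^M
        = (n:ℝ)^M - (M:ℝ)^(-(1/8:ℝ)) * (n:ℝ)^M := by ring
    linarith [B1bound, B2bound, cardcover]
  refine le_trans final ?_
  exact_mod_cast Finset.card_le_card hGsub

open scoped Classical in
/-- Sampling estimate: for i.i.d. uniform indices `i_1, …, i_M` (modeled by the uniform
measure on `Fin M → Fin n`), with probability at least `1 - M^{-1/8}` the sample mean of
`x` is within `C M^{-1/4} (n⁻¹ ∑ |x_j|^{3/2})^{2/3}` of the true mean. -/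
theorem stmt_11 :
    ∃ C : ℝ, 0 < C ∧ ∀ (n M : ℕ), 1 ≤ n → 1 ≤ M → ∀ x : Fin n → ℝ,
      (1 - (M : ℝ) ^ (-(1 / 8 : ℝ))) * (Fintype.card (Fin M → Fin n) : ℝ) ≤
        ((Finset.univ.filter (fun ι : Fin M → Fin n =>
          |(1 / (M : ℝ)) * ∑ j : Fin M, x (ι j) - (1 / (n : ℝ)) * ∑ j : Fin n, x j|
            ≤ C * (M : ℝ) ^ (-(1 / 4 : ℝ)) *
              ((1 / (n : ℝ)) * ∑ j : Fin n, |x j| ^ (3 / 2 : ℝ)) ^ (2 / 3 : ℝ))).card : ℝ) := by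
  refine ⟨9, by norm_num, ?_⟩
  intro n M hn hM x
  have hM1 : (1:ℝ) ≤ (M:ℝ) := by exact_mod_cast hM
  have Mpos : (0:ℝ) < (M:ℝ) := by linarith
  have hn1 : (1:ℝ) ≤ (n:ℝ) := by exact_mod_cast hn
  have npos : (0:ℝ) < (n:ℝ) := by linarith
  have hcard : (Fintype.card (Fin M → Fin n) : ℝ) = (n:ℝ)^M := by
    rw [Fintype.card_fun, Fintype.card_fin, Fintype.card_fin]; push_cast; ring
  have hm8 : 0 < (M : ℝ) ^ (-(1 / 8 : ℝ)) := Real.rpow_pos_of_pos Mpos _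
  set B : ℝ := (1 / (n : ℝ)) * ∑ j : Fin n, |x j| ^ (3 / 2 : ℝ) with hB
  have hBnonneg : 0 ≤ B := by
    rw [hB]
    have : 0 ≤ ∑ j : Fin n, |x j| ^ (3 / 2 : ℝ) :=
      Finset.sum_nonneg fun j _ => Real.rpow_nonneg (abs_nonneg _) _
    positivity
  rcases eq_or_lt_of_le hBnonneg with hB0 | hBpos
  · -- degenerate case : all x = 0
    have hxz : ∀ j, x j = 0 := by
      intro j
      have hsum : ∑ j : Fin n, |x j| ^ (3 / 2 : ℝ) = 0 := by
        have h := hB0.symm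
        rw [hB] at h
        field_simp at h
        simpa using h
      have := (Finset.sum_eq_zero_iff_of_nonneg
        (fun j _ => Real.rpow_nonneg (abs_nonneg (x j)) _)).mp hsum j (mem_univ j)
      have h2 : |x j| = 0 := by
        by_contra hne
        have : 0 < |x j| := lt_of_le_of_ne (abs_nonneg _) (Ne.symm hne)
        have := Real.rpow_pos_of_pos this (3/2 : ℝ)
        linarith
      exact abs_eq_zero.mp h2
    have hfilter : (Finset.univ.filter (fun ι : Fin M → Fin n =>
          |(1 / (M : ℝ)) * ∑ j : Fin M, x (ι j) - (1 / (n : ℝ)) * ∑ j : Fin n, x j|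
            ≤ 9 * (M : ℝ) ^ (-(1 / 4 : ℝ)) *
              ((1 / (n : ℝ)) * ∑ j : Fin n, |x j| ^ (3 / 2 : ℝ)) ^ (2 / 3 : ℝ)))
        = (univ : Finset (Fin M → Fin n)) := by
      refine Finset.filter_true_of_mem fun ι _ => ?_
      have e0 : ∀ j : Fin M, x (ι j) = 0 := fun j => hxz (ι j)
      rw [Finset.sum_congr rfl fun j _ => e0 j, Finset.sum_congr rfl fun j _ => hxz j]
      simp only [Finset.sum_const_zero, mul_zero, sub_zero, abs_zero]
      positivity
    rw [hfilter, Finset.card_univ]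
    have h1 : (1 - (M : ℝ) ^ (-(1 / 8 : ℝ))) ≤ 1 := by linarith
    have hne : Nonempty (Fin M → Fin n) := ⟨fun _ => ⟨0, hn⟩⟩
    have h2 : (0:ℝ) < (Fintype.card (Fin M → Fin n) : ℝ) := by
      exact_mod_cast Fintype.card_pos
    nlinarith
  · -- scaling case
    set A : ℝ := B ^ ((2:ℝ)/3) with hA
    have hApos : 0 < A := Real.rpow_pos_of_pos hBpos _
    have hA32 : A ^ ((3:ℝ)/2) = B := by
      rw [hA, ← Real.rpow_mul hBnonneg]; norm_num
    set x' : Fin n → ℝ := fun k => x k / A with hx'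
    have hx'sum : ∑ k, |x' k| ^ (3/2 : ℝ) ≤ (n:ℝ) := by
      have e1 : ∀ k, |x' k| ^ (3/2 : ℝ) = |x k| ^ (3/2 : ℝ) / B := by
        intro k
        rw [hx']
        simp only
        rw [abs_div, abs_of_pos hApos, Real.div_rpow (abs_nonneg _) hApos.le, hA32]
      rw [Finset.sum_congr rfl fun k _ => e1 k, ← Finset.sum_div]
      have e2 : ∑ j : Fin n, |x j| ^ (3 / 2 : ℝ) = (n:ℝ) * B := by
        rw [hB]; field_simp
      rw [e2]
      rw [mul_div_assoc, div_self (ne_of_gt hBpos)]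
      simp
    have key := core hn hM x' hx'sum
    have hpred : ∀ ι : Fin M → Fin n,
        (|(1 / (M : ℝ)) * ∑ j : Fin M, x' (ι j) - (1 / (n : ℝ)) * ∑ j : Fin n, x' j|
          ≤ 9 * (M : ℝ) ^ (-(1 / 4 : ℝ)))
        ↔ (|(1 / (M : ℝ)) * ∑ j : Fin M, x (ι j) - (1 / (n : ℝ)) * ∑ j : Fin n, x j|
            ≤ 9 * (M : ℝ) ^ (-(1 / 4 : ℝ)) * A) := by
      intro ι
      have e1 : ∑ j : Fin M, x' (ι j) = (∑ j : Fin M, x (ι j)) / A := by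
        rw [hx', ← Finset.sum_div]
      have e2 : ∑ j : Fin n, x' j = (∑ j : Fin n, x j) / A := by
        rw [hx', ← Finset.sum_div]
      have e3 : (1 / (M : ℝ)) * ∑ j : Fin M, x' (ι j) - (1 / (n : ℝ)) * ∑ j : Fin n, x' j
          = ((1 / (M : ℝ)) * ∑ j : Fin M, x (ι j) - (1 / (n : ℝ)) * ∑ j : Fin n, x j) / A := by
        rw [e1, e2]; field_simp
      rw [e3, abs_div, abs_of_pos hApos, div_le_iff₀ hApos]
    have hfe : (Finset.univ.filter (fun ι : Fin M → Fin n =>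
        |(1 / (M : ℝ)) * ∑ j : Fin M, x' (ι j) - (1 / (n : ℝ)) * ∑ j : Fin n, x' j|
          ≤ 9 * (M : ℝ) ^ (-(1 / 4 : ℝ))))
        = (Finset.univ.filter (fun ι : Fin M → Fin n =>
          |(1 / (M : ℝ)) * ∑ j : Fin M, x (ι j) - (1 / (n : ℝ)) * ∑ j : Fin n, x j|
            ≤ 9 * (M : ℝ) ^ (-(1 / 4 : ℝ)) * A)) := by
      apply Finset.filter_congr
      intro ι _
      simp only [hpred ι]
    rw [hcard]
    rw [hfe] at key
    exact key
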